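/- Duchet–Meyniel theorem: for all positive integers k and n, every n-vertex graph G contains either an independent set of size k or a clique minor K_t with t ≥ n/(2k−1). -/

import Mathlib

open SimpleGraph
open scoped Classical

noncomputable section

/-- The graph `K_t ⊠ S_t`: a clique of size `t` (the `inl` part), an independent set of
size `t` (the `inr` part), joined by a perfect matching. -/
def ktst (t : ℕ) : SimpleGraph (Fin t ⊕ Fin t) :=
  SimpleGraph.fromRel (fun x y =>
    match x, y with
    | Sum.inl i, Sum.inl j => i ≠ j
    | Sum.inl i, Sum.inr j => i = j
    | _, _ => False)

/-- The graph `K_t ⊠ K_t`: two cliques of size `t` joined by a perfect matching. -/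
def ktkt (t : ℕ) : SimpleGraph (Fin t ⊕ Fin t) :=
  SimpleGraph.fromRel (fun x y =>
    match x, y with
    | Sum.inl i, Sum.inl j => i ≠ j
    | Sum.inr i, Sum.inr j => i ≠ j
    | Sum.inl i, Sum.inr j => i = j
    | _, _ => False)

/-- The cycle graph on `ZMod n`. -/
def cycleG (n : ℕ) : SimpleGraph (ZMod n) :=
  SimpleGraph.fromRel (fun x y => y = x + 1)

/-- `σ` enumerates the vertices of `G` as a co-comparability ordering. -/
def IsCoCompOrdering {V : Type} {n : ℕ} (G : SimpleGraph V) (σ : Fin n ≃ V) : Prop :=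
  ∀ i j k : Fin n, i < j → j < k → G.Adj (σ i) (σ k) →
    G.Adj (σ j) (σ i) ∨ G.Adj (σ j) (σ k)

/-- `G` contains `H` as an induced subgraph. -/
def ContainsInducedIso {V W : Type} (G : SimpleGraph V) (H : SimpleGraph W) : Prop :=
  ∃ f : W → V, Function.Injective f ∧ ∀ x y, H.Adj x y ↔ G.Adj (f x) (f y)

/-- A graph is chordal iff it has no induced cycle of length at least 4. -/
def Chordal {V : Type} (G : SimpleGraph V) : Prop :=
  ∀ n, 4 ≤ n → ¬ ContainsInducedIso G (cycleG n)

/-- `G` contains `H` as an induced minor (via an induced minor model). -/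
def HasInducedMinor {V W : Type} (G : SimpleGraph V) (H : SimpleGraph W) : Prop :=
  ∃ S : W → Set V,
    (∀ w, (G.induce (S w)).Connected) ∧
    (∀ w w', w ≠ w' → Disjoint (S w) (S w')) ∧
    (∀ w w', H.Adj w w' → ∃ a ∈ S w, ∃ b ∈ S w', G.Adj a b) ∧
    (∀ w w', w ≠ w' → ¬ H.Adj w w' → ∀ a ∈ S w, ∀ b ∈ S w', ¬ G.Adj a b)

/-- `G` contains `K_t` as a minor (branch sets). -/
def HasCliqueMinor {V : Type} (G : SimpleGraph V) (t : ℕ) : Prop :=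
  ∃ S : Fin t → Set V,
    (∀ i, (G.induce (S i)).Connected) ∧
    (∀ i j, i ≠ j → Disjoint (S i) (S j)) ∧
    (∀ i j, i ≠ j → ∃ a ∈ S i, ∃ b ∈ S j, G.Adj a b)

/-- There is an induced matching of `G` of size `m` between `A` and its complement:
the `2m` matched vertices induce exactly the `m` matching edges in `G`. -/
def IsSimMatching {V : Type} (G : SimpleGraph V) (A : Set V) (m : ℕ) : Prop :=
  ∃ a b : Fin m → V,
    Function.Injective a ∧ Function.Injective b ∧
    (∀ i, a i ∈ A) ∧ (∀ i, b i ∉ A) ∧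
    (∀ i j, G.Adj (a i) (b j) ↔ i = j) ∧
    (∀ i j, ¬ G.Adj (a i) (a j)) ∧
    (∀ i j, ¬ G.Adj (b i) (b j))

/-- There is an induced matching of size `m` in the bipartite graph `G[A, V \ A]`
of edges crossing the cut. -/
def IsMimMatching {V : Type} (G : SimpleGraph V) (A : Set V) (m : ℕ) : Prop :=
  ∃ a b : Fin m → V,
    Function.Injective a ∧ Function.Injective b ∧
    (∀ i, a i ∈ A) ∧ (∀ i, b i ∉ A) ∧
    (∀ i j, G.Adj (a i) (b j) ↔ i = j)

def simval {V : Type} (G : SimpleGraph V) (A : Set V) : ℕ :=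
  sSup {m | IsSimMatching G A m}

def mimval {V : Type} (G : SimpleGraph V) (A : Set V) : ℕ :=
  sSup {m | IsMimMatching G A m}

/-- GF(2)-rank of the `A × Aᶜ` submatrix of the adjacency matrix: the dimension of the
span of the rows of that submatrix (rows extended by zero on columns of `A`). -/
def cutrk {V : Type} [Fintype V] (G : SimpleGraph V) (A : Set V) : ℕ :=
  Module.finrank (ZMod 2) (Submodule.span (ZMod 2)
    {r : V → ZMod 2 | ∃ a ∈ A, r = fun v => if v ∉ A ∧ G.Adj a v then 1 else 0})

/-- A branch-decomposition of a graph on vertex set `V`: a finite subcubic tree together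
with an injection of `V` onto its leaves. -/
structure BranchDecomp (V : Type) [Fintype V] where
  β : Type
  finβ : Fintype β
  T : SimpleGraph β
  connected : T.Connected
  acyclic : T.IsAcyclic
  subcubic : ∀ x : β, (T.neighborSet x).ncard = 1 ∨ (T.neighborSet x).ncard = 3
  L : V → β
  inj : Function.Injective L
  leaves : ∀ x : β, (T.neighborSet x).ncard = 1 ↔ ∃ v, L v = x

/-- The side of the cut induced by the tree edge `xy`, on the side of `x`. -/
def BranchDecomp.cut {V : Type} [Fintype V] (D : BranchDecomp V) (x y : D.β) : Set V :=
  {v | (D.T.deleteEdges {s(x, y)}).Reachable (D.L v) x}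

/-- The `f`-width of a graph on vertex set `V`: minimum over branch-decompositions of the
maximum of `f` over the cuts of the decomposition. -/
def fWidth {V : Type} [Fintype V] (f : Set V → ℕ) : ℕ :=
  sInf {w | ∃ D : BranchDecomp V, ∀ x y, D.T.Adj x y → f (D.cut x y) ≤ w}

def simw {V : Type} [Fintype V] (G : SimpleGraph V) : ℕ := fWidth (simval G)
def mimw {V : Type} [Fintype V] (G : SimpleGraph V) : ℕ := fWidth (mimval G)
def rankw {V : Type} [Fintype V] (G : SimpleGraph V) : ℕ := fWidth (cutrk G)

/-- Contraction of the edge `v₁v₂`: the vertex `v₂` is removed and `v₁` plays the role of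
the contracted vertex `z`, adjacent to all former neighbors of `v₁` or `v₂`. -/
def contractE {V : Type} (G : SimpleGraph V) (v1 v2 : V) : SimpleGraph {v : V // v ≠ v2} :=
  SimpleGraph.fromRel (fun x y =>
    G.Adj x y ∨ ((x : V) = v1 ∧ G.Adj v2 y) ∨ ((y : V) = v1 ∧ G.Adj (x : V) v2))

/-- The `(p × q)` column-clique grid. -/
def ccGrid (p q : ℕ) : SimpleGraph (Fin p × Fin q) :=
  SimpleGraph.fromRel (fun u v =>
    (u.2 = v.2) ∨ (u.1 = v.1 ∧ ((u.2 : ℕ) + 1 = v.2 ∨ (v.2 : ℕ) + 1 = u.2)))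

/-- The `(p × q)` Hsu-clique chain graph. -/
def hsu (p q : ℕ) : SimpleGraph (Fin p × Fin q) :=
  SimpleGraph.fromRel (fun u v =>
    (u.2 = v.2) ∨ ((u.2 : ℕ) + 1 = v.2 ∧ u.1 ≤ v.1))

/-- The `(k × k)` grid graph. -/
def gridG (k : ℕ) : SimpleGraph (Fin k × Fin k) :=
  SimpleGraph.fromRel (fun u v =>
    (u.1 = v.1 ∧ (u.2 : ℕ) + 1 = v.2) ∨ (u.2 = v.2 ∧ (u.1 : ℕ) + 1 = v.1))

/-- A tree-decomposition of `G`. -/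
structure TreeDecomp (V : Type) (G : SimpleGraph V) where
  β : Type
  finβ : Fintype β
  T : SimpleGraph β
  connected : T.Connected
  acyclic : T.IsAcyclic
  B : β → Set V
  coverV : ∀ v : V, ∃ t, v ∈ B t
  coverE : ∀ u v, G.Adj u v → ∃ t, u ∈ B t ∧ v ∈ B t
  coherent : ∀ v : V, (T.induce {t | v ∈ B t}).Connected

/-- Tree-width. -/
def tw {V : Type} (G : SimpleGraph V) : ℕ :=
  sInf {k | ∃ D : TreeDecomp V G, ∀ t, (D.B t).ncard ≤ k + 1}

/-- `G` is `d`-degenerate: every (induced) subgraph has a vertex of degree at most `d`. -/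
def Degenerate {V : Type} (G : SimpleGraph V) (d : ℕ) : Prop :=
  ∀ S : Set V, S.Nonempty → ∃ v ∈ S, {u ∈ S | G.Adj v u}.ncard ≤ d

/-- Every graph on `N` vertices contains a clique of size `k` or an independent set of
size `l`. -/
def ramseyProp (N k l : ℕ) : Prop :=
  ∀ G : SimpleGraph (Fin N),
    (∃ s : Finset (Fin N), G.IsNClique k s) ∨ (∃ s : Finset (Fin N), Gᶜ.IsNClique l s)

/-- The Ramsey number `R(k, l)`. -/
def ramsey (k l : ℕ) : ℕ := sInf {N | ramseyProp N k l}

/-- `G` is a circle graph: the intersection graph of chords of a circle, equivalently the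
overlap graph of a family of intervals with pairwise distinct endpoints. -/
def IsCircleGraph {V : Type} (G : SimpleGraph V) : Prop :=
  ∃ a b : V → ℝ, (∀ v, a v < b v) ∧
    (∀ v w : V, v ≠ w → a v ≠ a w ∧ a v ≠ b w ∧ b v ≠ a w ∧ b v ≠ b w) ∧
    (∀ v w, G.Adj v w ↔
      (a v < a w ∧ a w < b v ∧ b v < b w) ∨ (a w < a v ∧ a v < b w ∧ b w < b v))

/-- Vertex set of the split graph witnessing unbounded mim-width: a clique `Fin m`
together with one independent vertex for each nonempty subset of the clique. -/
abbrev splitV (m : ℕ) := Fin m ⊕ {S : Finset (Fin m) // S.Nonempty}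

/-- The split graph with clique of size `m` and an independent set of size `2^m - 1`
whose vertices have pairwise distinct nonempty neighborhoods in the clique. -/
def splitG (m : ℕ) : SimpleGraph (splitV m) :=
  SimpleGraph.fromRel (fun x y =>
    match x, y with
    | Sum.inl i, Sum.inl j => i ≠ j
    | Sum.inl i, Sum.inr S => i ∈ S.1
    | _, _ => False)

end

namespace DMproof

variable {V : Type}


lemma conn_singleton (G : SimpleGraph V) (v : V) : (G.induce ({v} : Set V)).Connected := by
  haveI : Nonempty ({v} : Set V) := ⟨⟨v, rfl⟩⟩
  refine ⟨fun a b => ?_⟩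
  have : a = b := Subtype.ext ((Set.eq_of_mem_singleton a.2).trans (Set.eq_of_mem_singleton b.2).symm)
  exact this ▸ SimpleGraph.Reachable.refl _

lemma conn_insert (G : SimpleGraph V) {D : Set V} (hc : (G.induce D).Connected)
    {d w : V} (hd : d ∈ D) (hadj : G.Adj d w) :
    (G.induce (insert w D)).Connected := by
  by_cases hw : w ∈ D
  · rwa [Set.insert_eq_self.2 hw]
  · haveI : Nonempty ↑(insert w D) := ⟨⟨d, Set.mem_insert_of_mem _ hd⟩⟩
    have key : ∀ a : ↑(insert w D),
        (G.induce (insert w D)).Reachable a ⟨d, Set.mem_insert_of_mem _ hd⟩ := by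
      rintro ⟨a, ha⟩
      rcases Set.mem_insert_iff.1 ha with rfl | haD
      · exact SimpleGraph.Adj.reachable (show G.Adj a d from hadj.symm)
      · exact (hc.preconnected ⟨a, haD⟩ ⟨d, hd⟩).map
          ((⟨fun x => ⟨x.1, Set.mem_insert_of_mem _ x.2⟩, fun h => h⟩ : G.induce D →g G.induce (insert w D)))
    exact ⟨fun a b => (key a).trans (key b).symm⟩

lemma walk_find (G : SimpleGraph V) {A : Set V} (ND : Set V) :
    ∀ {x y : ↥A} (_ : (G.induce A).Walk x y), ↑x ∉ ND → ↑y ∈ ND →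
      ∃ u' w : V, u' ∈ A ∧ w ∈ A ∧ u' ∉ ND ∧ w ∈ ND ∧ G.Adj u' w := by
  intro x y p
  induction p with
  | nil => intro h1 h2; exact absurd h2 h1
  | @cons x z y h q ih =>
    intro h1 h2
    by_cases hz : (z : V) ∈ ND
    · exact ⟨x, z, x.2, z.2, h1, hz, h⟩
    · exact ih hz h2

def Indep (G : SimpleGraph V) (s : Finset V) : Prop :=
  ∀ a ∈ s, ∀ b ∈ s, a ≠ b → ¬ G.Adj a b

lemma domset (G : SimpleGraph V) (A : Finset V) (v : V) (hv : v ∈ A)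
    (hreach : ∀ u (hu : u ∈ A), (G.induce (A : Set V)).Reachable ⟨v, hv⟩ ⟨u, hu⟩)
    (a : ℕ) (ha : 1 ≤ a)
    (hcap : ∀ s : Finset V, s ⊆ A → Indep G s → s.card ≤ a) :
    ∃ D : Finset V, D ⊆ A ∧ D.Nonempty ∧ (G.induce (D : Set V)).Connected ∧
      D.card ≤ 2 * a - 1 ∧ ∀ u ∈ A, u ∉ D → ∃ d ∈ D, G.Adj d u := by
  suffices aux : ∀ m (D I : Finset V), D ⊆ A → v ∈ D → I ⊆ D → Indep G I →
      I.Nonempty → D.card + 1 ≤ 2 * I.card → (G.induce (D : Set V)).Connected →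
      A.card ≤ D.card + m →
      ∃ D' : Finset V, D' ⊆ A ∧ D'.Nonempty ∧ (G.induce (D' : Set V)).Connected ∧
        D'.card ≤ 2 * a - 1 ∧ ∀ u ∈ A, u ∉ D' → ∃ d ∈ D', G.Adj d u by
    refine aux A.card {v} {v} ?_ (Finset.mem_singleton_self v) (subset_refl _) ?_
      ⟨v, Finset.mem_singleton_self v⟩ (by simp) ?_ (by omega)
    · simpa using hv
    · intro x hx y hy hxy
      simp only [Finset.mem_singleton] at hx hy
      exact absurd (hx.trans hy.symm) hxy
    · rw [Finset.coe_singleton]; exact conn_singleton G v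
  intro m
  induction m with
  | zero =>
    intro D I hDA hvD hID hI hInem hcard hconn hm
    have hDA' : D = A := Finset.eq_of_subset_of_card_le hDA (by omega)
    have hIa : I.card ≤ a := hcap I (hID.trans hDA) hI
    exact ⟨D, hDA, ⟨v, hvD⟩, hconn, by omega, fun u hu hu' => absurd (hDA' ▸ hu) hu'⟩
  | succ m ih =>
    intro D I hDA hvD hID hI hInem hcard hconn hm
    by_cases hdom : ∀ u ∈ A, u ∉ D → ∃ d ∈ D, G.Adj d u
    · have hIa : I.card ≤ a := hcap I (hID.trans hDA) hI
      exact ⟨D, hDA, ⟨v, hvD⟩, hconn, by omega, hdom⟩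
    · push_neg at hdom
      obtain ⟨u, huA, huD, hund⟩ := hdom
      set ND : Set V := {z | z ∈ D ∨ ∃ d ∈ D, G.Adj d z} with hND
      have huND : (u : V) ∉ ND := by
        rintro (h | ⟨d, hd, hadj⟩)
        · exact huD h
        · exact hund d hd hadj
      have hvND : (v : V) ∈ ND := Or.inl hvD
      obtain ⟨p⟩ := (hreach u huA).symm
      obtain ⟨u', w, hu'A, hwA, hu'ND, hwND, hadj⟩ := walk_find G ND p huND hvND
      have hu'D : u' ∉ D := fun h => hu'ND (Or.inl h)
      have hwD : w ∉ D := by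
        intro h
        exact hu'ND (Or.inr ⟨w, h, hadj.symm⟩)
      obtain ⟨d, hd, hdw⟩ : ∃ d ∈ D, G.Adj d w := by
        rcases hwND with h | h
        · exact absurd h hwD
        · exact h
      have hu'w : u' ≠ w := fun h => hu'ND (h ▸ hwND)
      have hu'I : u' ∉ I := fun h => hu'D (hID h)
      have hu'nadj : ∀ i ∈ I, ¬ G.Adj i u' := fun i hi hadj' =>
        hu'ND (Or.inr ⟨i, hID hi, hadj'⟩)
      refine ih (insert u' (insert w D)) (insert u' I) ?_ ?_ ?_ ?_ ?_ ?_ ?_ ?_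
      · intro x hx
        rcases Finset.mem_insert.1 hx with rfl | hx
        · exact hu'A
        · rcases Finset.mem_insert.1 hx with rfl | hx
          · exact hwA
          · exact hDA hx
      · exact Finset.mem_insert_of_mem (Finset.mem_insert_of_mem hvD)
      · intro x hx
        rcases Finset.mem_insert.1 hx with rfl | hx
        · exact Finset.mem_insert_self _ _
        · exact Finset.mem_insert_of_mem (Finset.mem_insert_of_mem (hID hx))
      · intro x hx y hy hxy
        rcases Finset.mem_insert.1 hx with hx | hx
        · rcases Finset.mem_insert.1 hy with hy | hy
          · exact absurd (hx.trans hy.symm) hxy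
          · intro h; rw [hx] at h; exact hu'nadj y hy h.symm
        · rcases Finset.mem_insert.1 hy with hy | hy
          · intro h; rw [hy] at h; exact hu'nadj x hx h
          · exact hI x hx y hy hxy
      · exact ⟨u', Finset.mem_insert_self _ _⟩
      · rw [Finset.card_insert_of_notMem hu'I,
          Finset.card_insert_of_notMem (by
            simp only [Finset.mem_insert]
            rintro (rfl | h); exact hu'w rfl; exact hu'D h),
          Finset.card_insert_of_notMem hwD]
        omega
      · have c1 : (G.induce ((insert w D : Finset V) : Set V)).Connected := by
          rw [Finset.coe_insert]
          exact conn_insert G hconn hd hdw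
        have c2 : (G.induce (insert u' ((insert w D : Finset V) : Set V))).Connected :=
          conn_insert G c1 (by rw [Finset.coe_insert]; exact Set.mem_insert w _) hadj.symm
        rw [Finset.coe_insert]
        exact c2
      · rw [Finset.card_insert_of_notMem (by
            simp only [Finset.mem_insert]
            rintro (rfl | h); exact hu'w rfl; exact hu'D h),
          Finset.card_insert_of_notMem hwD]
        omega

lemma key (G : SimpleGraph V) :
    ∀ n (A : Finset V), A.card ≤ n → ∀ a, 1 ≤ a →
      (∀ s : Finset V, s ⊆ A → Indep G s → s.card ≤ a) →
      ∃ t, A.card ≤ (2 * a - 1) * t ∧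
        ∃ S : Fin t → Set V, (∀ i, S i ⊆ (A : Set V)) ∧
          (∀ i, (G.induce (S i)).Connected) ∧
          (∀ i j, i ≠ j → Disjoint (S i) (S j)) ∧
          (∀ i j, i ≠ j → ∃ x ∈ S i, ∃ y ∈ S j, G.Adj x y) := by
  intro n
  induction n with
  | zero =>
    intro A hA a ha hcap
    exact ⟨0, by simpa using hA, Fin.elim0, fun i => i.elim0, fun i => i.elim0,
      fun i => i.elim0, fun i => i.elim0⟩
  | succ n ih =>
    intro A hA a ha hcap
    rcases Finset.eq_empty_or_nonempty A with rfl | ⟨v, hv⟩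
    · exact ⟨0, by simp, Fin.elim0, fun i => i.elim0, fun i => i.elim0,
        fun i => i.elim0, fun i => i.elim0⟩
    set C := A.filter
      (fun u => ∀ h : u ∈ A, (G.induce (A : Set V)).Reachable ⟨v, hv⟩ ⟨u, h⟩) with hCdef
    have hCA : C ⊆ A := Finset.filter_subset _ _
    have hvC : v ∈ C := Finset.mem_filter.2 ⟨hv, fun _ => SimpleGraph.Reachable.refl _⟩
    by_cases hCeq : C = A
    · -- connected case
      have hreach : ∀ u (hu : u ∈ A), (G.induce (A : Set V)).Reachable ⟨v, hv⟩ ⟨u, hu⟩ := by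
        intro u hu
        have : u ∈ C := hCeq ▸ hu
        exact (Finset.mem_filter.1 this).2 hu
      obtain ⟨D, hDA, hDne, hDconn, hDcard, hDdom⟩ := domset G A v hv hreach a ha hcap
      have hBcard : (A \ D).card ≤ n := by
        rw [Finset.card_sdiff_of_subset hDA]
        have h1 := Finset.card_pos.2 hDne
        have h2 := Finset.card_le_card hDA
        omega
      obtain ⟨t', hbound, S', hsub', hconn', hdisj', hadj'⟩ :=
        ih (A \ D) hBcard a ha
          (fun s hs hind => hcap s (hs.trans Finset.sdiff_subset) hind)
      have hd0 : ∀ j : Fin t', Disjoint ((D : Finset V) : Set V) (S' j) := by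
        intro j
        rw [Set.disjoint_left]
        intro x hxD hxS
        have : x ∈ A \ D := Finset.mem_coe.1 (hsub' j hxS)
        exact (Finset.mem_sdiff.1 this).2 (Finset.mem_coe.1 hxD)
      have hcrossD : ∀ j' : Fin t',
          ∃ x ∈ ((D : Finset V) : Set V), ∃ y ∈ S' j', G.Adj x y := by
        intro j'
        obtain ⟨⟨y, hy⟩⟩ := (hconn' j').nonempty
        have hyB : y ∈ A \ D := Finset.mem_coe.1 (hsub' j' hy)
        obtain ⟨d, hd, hdy⟩ := hDdom y (Finset.mem_sdiff.1 hyB).1 (Finset.mem_sdiff.1 hyB).2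
        exact ⟨d, hd, y, hy, hdy⟩
      refine ⟨t' + 1, ?_, Fin.cons (D : Set V) S', ?_, ?_, ?_, ?_⟩
      · rw [← Finset.card_sdiff_add_card_eq_card hDA, Nat.mul_succ]
        exact Nat.add_le_add hbound hDcard
      · intro i
        rcases Fin.eq_zero_or_eq_succ i with rfl | ⟨i', rfl⟩
        · simpa only [Fin.cons_zero] using Finset.coe_subset.2 hDA
        · simp only [Fin.cons_succ]
          exact (hsub' i').trans (Finset.coe_subset.2 Finset.sdiff_subset)
      · intro i
        rcases Fin.eq_zero_or_eq_succ i with rfl | ⟨i', rfl⟩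
        · rw [Fin.cons_zero]; exact hDconn
        · rw [Fin.cons_succ]; exact hconn' i'
      · intro i j hij
        rcases Fin.eq_zero_or_eq_succ i with rfl | ⟨i', rfl⟩ <;>
          rcases Fin.eq_zero_or_eq_succ j with rfl | ⟨j', rfl⟩
        · exact absurd rfl hij
        · simpa only [Fin.cons_zero, Fin.cons_succ] using hd0 j'
        · simpa only [Fin.cons_zero, Fin.cons_succ] using (hd0 i').symm
        · simp only [Fin.cons_succ]
          exact hdisj' i' j' (fun h => hij (by rw [h]))
      · intro i j hij
        rcases Fin.eq_zero_or_eq_succ i with rfl | ⟨i', rfl⟩ <;>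
          rcases Fin.eq_zero_or_eq_succ j with rfl | ⟨j', rfl⟩
        · exact absurd rfl hij
        · simpa only [Fin.cons_zero, Fin.cons_succ] using hcrossD j'
        · obtain ⟨x, hx, y, hy, hxy⟩ := hcrossD i'
          refine ⟨y, ?_, x, ?_, hxy.symm⟩
          · simpa only [Fin.cons_succ] using hy
          · simpa only [Fin.cons_zero] using hx
        · simp only [Fin.cons_succ]
          exact hadj' i' j' (fun h => hij (by rw [h]))
    · -- disconnected case
      have hcross : ∀ x ∈ C, ∀ y ∈ A, G.Adj x y → y ∈ C := by
        intro x hx y hy hxy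
        obtain ⟨hxA, hxr⟩ := Finset.mem_filter.1 hx
        refine Finset.mem_filter.2 ⟨hy, fun h => ?_⟩
        exact (hxr hxA).trans (SimpleGraph.Adj.reachable (by exact hxy))
      obtain ⟨u₀, hu₀A, hu₀C⟩ : ∃ u₀ ∈ A, u₀ ∉ C := by
        by_contra hcon
        push_neg at hcon
        exact hCeq (Finset.Subset.antisymm hCA hcon)
      set coll := C.powerset.filter (fun s => Indep G s) with hcoll
      have hvcoll : {v} ∈ coll := by
        refine Finset.mem_filter.2 ⟨Finset.mem_powerset.2 (by simpa using hvC), ?_⟩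
        intro x hx y hy hxy
        simp only [Finset.mem_singleton] at hx hy
        exact absurd (hx.trans hy.symm) hxy
      set b := coll.sup Finset.card with hbdef
      obtain ⟨s₀, hs₀coll, hs₀card⟩ := Finset.exists_mem_eq_sup coll ⟨{v}, hvcoll⟩ Finset.card
      have hs₀C : s₀ ⊆ C := Finset.mem_powerset.1 (Finset.mem_filter.1 hs₀coll).1
      have hs₀ind : Indep G s₀ := (Finset.mem_filter.1 hs₀coll).2
      have hb1 : 1 ≤ b := le_trans (by simp) (Finset.le_sup hvcoll)
      have hba : b + 1 ≤ a := by
        have hu₀s₀ : u₀ ∉ s₀ := fun h => hu₀C (hs₀C h)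
        have hins : Indep G (insert u₀ s₀) := by
          intro x hx y hy hxy
          rcases Finset.mem_insert.1 hx with hx | hx <;>
            rcases Finset.mem_insert.1 hy with hy | hy
          · exact absurd (hx.trans hy.symm) hxy
          · intro h
            rw [hx] at h
            exact hu₀C (hcross y (hs₀C hy) u₀ hu₀A h.symm)
          · intro h
            rw [hy] at h
            exact hu₀C (hcross x (hs₀C hx) u₀ hu₀A h)
          · exact hs₀ind x hx y hy hxy
        have hc := hcap (insert u₀ s₀)
          (Finset.insert_subset hu₀A (hs₀C.trans hCA)) hins
        rw [Finset.card_insert_of_notMem hu₀s₀] at hc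
        omega
      have hcapC : ∀ s : Finset V, s ⊆ C → Indep G s → s.card ≤ b :=
        fun s hs hind => Finset.le_sup (Finset.mem_filter.2 ⟨Finset.mem_powerset.2 hs, hind⟩)
      have hcapR : ∀ s : Finset V, s ⊆ A \ C → Indep G s → s.card ≤ a - b := by
        intro s hs hind
        have hdisj : Disjoint s s₀ := Finset.disjoint_left.2
          (fun {x} hx hxs₀ => (Finset.mem_sdiff.1 (hs hx)).2 (hs₀C hxs₀))
        have hunion : Indep G (s ∪ s₀) := by
          intro x hx y hy hxy
          rcases Finset.mem_union.1 hx with hx | hx <;>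
            rcases Finset.mem_union.1 hy with hy | hy
          · exact hind x hx y hy hxy
          · intro h
            exact (Finset.mem_sdiff.1 (hs hx)).2
              (hcross y (hs₀C hy) x (Finset.mem_sdiff.1 (hs hx)).1 h.symm)
          · intro h
            exact (Finset.mem_sdiff.1 (hs hy)).2
              (hcross x (hs₀C hx) y (Finset.mem_sdiff.1 (hs hy)).1 h)
          · exact hs₀ind x hx y hy hxy
        have hc := hcap (s ∪ s₀)
          (Finset.union_subset (hs.trans Finset.sdiff_subset) (hs₀C.trans hCA)) hunion
        rw [Finset.card_union_of_disjoint hdisj] at hc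
        omega
      have hCcard : C.card < A.card := Finset.card_lt_card (Finset.ssubset_iff_subset_ne.2 ⟨hCA, hCeq⟩)
      have hCle : C.card ≤ A.card := le_of_lt hCcard
      have hC1 : 1 ≤ C.card := Finset.card_pos.2 ⟨v, hvC⟩
      obtain ⟨t₁, hb₁, S₁, hsub₁, hconn₁, hdisj₁, hadj₁⟩ := ih C (by omega) b hb1 hcapC
      obtain ⟨t₂, hb₂, S₂, hsub₂, hconn₂, hdisj₂, hadj₂⟩ :=
        ih (A \ C) (by rw [Finset.card_sdiff_of_subset hCA]; omega) (a - b) (by omega) hcapR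
      have hsum : A.card = C.card + (A \ C).card := by
        rw [Finset.card_sdiff_of_subset hCA]; omega
      have harith : (2 * b - 1) + (2 * (a - b) - 1) ≤ 2 * a - 1 := by omega
      rcases le_total t₁ t₂ with hle | hle
      · refine ⟨t₂, ?_, S₂,
          fun i => (hsub₂ i).trans (Finset.coe_subset.2 Finset.sdiff_subset),
          hconn₂, hdisj₂, hadj₂⟩
        calc A.card = C.card + (A \ C).card := hsum
          _ ≤ (2 * b - 1) * t₁ + (2 * (a - b) - 1) * t₂ := Nat.add_le_add hb₁ hb₂
          _ ≤ (2 * b - 1) * t₂ + (2 * (a - b) - 1) * t₂ :=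
              Nat.add_le_add_right (Nat.mul_le_mul le_rfl hle) _
          _ = ((2 * b - 1) + (2 * (a - b) - 1)) * t₂ := (Nat.add_mul _ _ _).symm
          _ ≤ (2 * a - 1) * t₂ := Nat.mul_le_mul harith le_rfl
      · refine ⟨t₁, ?_, S₁,
          fun i => (hsub₁ i).trans (Finset.coe_subset.2 hCA),
          hconn₁, hdisj₁, hadj₁⟩
        calc A.card = C.card + (A \ C).card := hsum
          _ ≤ (2 * b - 1) * t₁ + (2 * (a - b) - 1) * t₂ := Nat.add_le_add hb₁ hb₂
          _ ≤ (2 * b - 1) * t₁ + (2 * (a - b) - 1) * t₁ :=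
              Nat.add_le_add_left (Nat.mul_le_mul le_rfl hle) _
          _ = ((2 * b - 1) + (2 * (a - b) - 1)) * t₁ := (Nat.add_mul _ _ _).symm
          _ ≤ (2 * a - 1) * t₁ := Nat.mul_le_mul harith le_rfl

end DMproof

/-- Duchet–Meyniel theorem. Every `n`-vertex graph contains an independent
set of size `k` or a `K_t`-minor with `t ≥ n/(2k − 1)`. -/
theorem stmt12 {V : Type} [Fintype V] (G : SimpleGraph V) (k : ℕ) (hk : 1 ≤ k) :
    (∃ s : Finset V, s.card = k ∧ ∀ a ∈ s, ∀ b ∈ s, a ≠ b → ¬ G.Adj a b) ∨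
    (∃ t : ℕ, Fintype.card V ≤ (2 * k - 1) * t ∧ HasCliqueMinor G t) := by
  by_cases h : ∃ s : Finset V, s.card = k ∧ ∀ a ∈ s, ∀ b ∈ s, a ≠ b → ¬ G.Adj a b
  · exact Or.inl h
  · right
    have hcap : ∀ s : Finset V, s ⊆ Finset.univ → DMproof.Indep G s → s.card ≤ k := by
      intro s _ hs
      by_contra hlt
      push_neg at hlt
      obtain ⟨s', hs', hcard⟩ := Finset.exists_subset_card_eq (le_of_lt hlt)
      exact h ⟨s', hcard, fun a ha b hb hab => hs a (hs' ha) b (hs' hb) hab⟩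
    obtain ⟨t, hb, S, _, hconn, hdisj, hadj⟩ :=
      DMproof.key G (Fintype.card V) Finset.univ (by simp) k hk hcap
    exact ⟨t, by simpa using hb, S, hconn, hdisj, hadj⟩
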